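/- In the counter-example LP with x_{k+1} = x* - (1/η)(AᵀA)^{-1}z_k and z_k = (-1)^k(t₀/t_k)c, the primal optimality gap and feasibility violation satisfy |cᵀ(x* - x_T)| = (cᵀ(AᵀA)^{-1}c/η)·(t₀/t_{T-1}) and ‖Ax_T - b‖ = (‖A(AᵀA)^{-1}c‖/η)·(t₀/t_{T-1}); since (T+1)/2 ≤ t_T ≤ T+1, both gaps are of order Θ(1/T). -/
import Mathlib


open Matrix

theorem guler2nd_primal_gap_exact {m n : ℕ} (hmn : n < m)
    (A : Matrix (Fin m) (Fin n) ℝ) (hrank : A.rank = n)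
    (b : Fin m → ℝ) (hb : ∃ x₀ : Fin n → ℝ, A.mulVec x₀ = b)
    (c : Fin n → ℝ) (η : ℝ) (hη : 0 < η)
    (t : ℕ → ℝ) (ht0 : t 0 = 1)
    (htrec : ∀ k, t (k + 1) = (1 + Real.sqrt (1 + 4 * t k ^ 2)) / 2)
    (xs : Fin n → ℝ) (hxs : xs = (Aᵀ * A)⁻¹.mulVec (Aᵀ.mulVec b))
    (z : ℕ → Fin n → ℝ) (hzc : ∀ k, z k = ((-1 : ℝ) ^ k * (t 0 / t k)) • c)
    (x : ℕ → Fin n → ℝ)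
    (hx : ∀ k, x (k + 1) = xs - (1 / η) • (Aᵀ * A)⁻¹.mulVec (z k))
    (T : ℕ) (hT : 1 ≤ T) :
    |c ⬝ᵥ (xs - x T)| = c ⬝ᵥ (Aᵀ * A)⁻¹.mulVec c / η * (t 0 / t (T - 1)) ∧
      ‖A.mulVec (x T) - b‖ = ‖A.mulVec ((Aᵀ * A)⁻¹.mulVec c)‖ / η * (t 0 / t (T - 1)) := by
  -- positivity of t
  have htpos : ∀ k, 0 < t k := by
    intro k
    cases k with
    | zero => rw [ht0]; norm_num
    | succ k =>
      rw [htrec k]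
      have h1 : (0:ℝ) ≤ Real.sqrt (1 + 4 * t k ^ 2) := Real.sqrt_nonneg _
      linarith
  -- invertibility of AᵀA
  set M := Aᵀ * A with hM
  have hker : LinearMap.ker A.mulVecLin = ⊥ := by
    have h1 := A.mulVecLin.finrank_range_add_finrank_ker
    have h2 : A.rank = Module.finrank ℝ (LinearMap.range A.mulVecLin) := rfl
    rw [← h2, hrank] at h1
    simp only [Module.finrank_fin_fun] at h1
    have h3 : Module.finrank ℝ (LinearMap.ker A.mulVecLin) = 0 := by omega
    exact Submodule.finrank_eq_zero.mp h3
  have hMunit : IsUnit M := by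
    rw [← Matrix.mulVec_injective_iff_isUnit]
    have : LinearMap.ker M.mulVecLin = ⊥ := by
      rw [hM, Matrix.ker_mulVecLin_transpose_mul_self, hker]
    intro u v huv
    have := LinearMap.ker_eq_bot.mp this
    exact this huv
  have hMM : M⁻¹ * M = 1 := Matrix.nonsing_inv_mul M ((Matrix.isUnit_iff_isUnit_det M).mp hMunit)
  -- A xs = b
  obtain ⟨x₀, hx₀⟩ := hb
  have hxs' : xs = x₀ := by
    have h1 : Aᵀ.mulVec (A.mulVec x₀) = M.mulVec x₀ := by rw [Matrix.mulVec_mulVec]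
    rw [hxs, ← hx₀, h1, Matrix.mulVec_mulVec, hMM, Matrix.one_mulVec]
  have hAxs : A.mulVec xs = b := by rw [hxs', hx₀]
  -- key decomposition
  obtain ⟨k, rfl⟩ : ∃ k, T = k + 1 := ⟨T - 1, (Nat.succ_pred_eq_of_pos hT).symm⟩
  have hTk : (k + 1) - 1 = k := rfl
  set s : ℝ := (-1 : ℝ) ^ k * (t 0 / t k) with hs
  have hdiff : xs - x (k + 1) = (s / η) • M⁻¹.mulVec c := by
    rw [hx k, hzc k, ← hs]
    rw [Matrix.mulVec_smul]
    simp only [sub_sub_cancel, smul_smul]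
    ring_nf
  -- nonnegativity of the quadratic form
  have hquad : 0 ≤ c ⬝ᵥ M⁻¹.mulVec c := by
    set y := M⁻¹.mulVec c with hy
    have hc : c = M.mulVec y := by
      rw [hy, Matrix.mulVec_mulVec, Matrix.mul_nonsing_inv M
        ((Matrix.isUnit_iff_isUnit_det M).mp hMunit), Matrix.one_mulVec]
    calc 0 ≤ (A.mulVec y) ⬝ᵥ (A.mulVec y) :=
          Finset.sum_nonneg fun i _ => mul_self_nonneg _
      _ = c ⬝ᵥ y := by
          rw [Matrix.dotProduct_mulVec, hc, hM, ← Matrix.mulVec_mulVec,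
            Matrix.mulVec_transpose]
  have habs_s : |s| = t 0 / t k := by
    rw [hs, abs_mul, abs_pow, abs_neg, abs_one, one_pow, one_mul,
      abs_div, abs_of_pos (htpos 0), abs_of_pos (htpos k)]
  simp only [Nat.add_sub_cancel]
  constructor
  · rw [hdiff, dotProduct_smul, smul_eq_mul, abs_mul, abs_of_nonneg hquad,
      abs_div, abs_of_pos hη, habs_s]
    ring
  · have : A.mulVec (x (k + 1)) - b = (-(s / η)) • A.mulVec (M⁻¹.mulVec c) := by
      have h1 : A.mulVec (x (k+1)) - b = A.mulVec (x (k+1)) - A.mulVec xs := by rw [hAxs]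
      rw [h1, ← Matrix.mulVec_sub, ← Matrix.mulVec_smul]
      have : x (k+1) - xs = -(xs - x (k+1)) := by ring_nf
      rw [this, hdiff, ← neg_smul]
    rw [this, norm_smul, Real.norm_eq_abs, abs_neg, abs_div, abs_of_pos hη, habs_s]
    ring
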